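/- arXiv:1109.5164 — 4 statements merged into one kernel-verified Lean document; each statement's English description precedes it below -/
import Mathlib

section
/- Let l ≥ 1 and let r_1, …, r_l be positive integers with r_1 + ⋯ + r_l = r, and let d be an integer with gcd(r,d) = 1. For a real number λ set M(r_1,…,r_l; λ) = Σ_{i=1}^{l−1} (r_i + r_{i+1})·⟨(r_1+⋯+r_i)·λ⟩. Then for every real x with 0 < x and x ≠ 1, writing y = x^{−1}, one has y^{M(r_1,…,r_l; d/r)} / ∏_{i=1}^{l−1}(1 − y^{r_i+r_{i+1}}) = (−1)^{l−1} · x^{M(r_l,…,r_1; d/r)} / ∏_{i=1}^{l−1}(1 − x^{r_i+r_{i+1}}). -/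
open Finset

noncomputable section

/-- `ang x` is `⟨x⟩ = ⌊x⌋ + 1 - x`, the unique element of `(0,1]` with `x + ⟨x⟩ ∈ ℤ`. -/
def ang (x : ℝ) : ℝ := (⌊x⌋ : ℝ) + 1 - x

/-- `M(r₁,…,r_l; λ) = Σ_{i=1}^{l-1} (r_i + r_{i+1}) · ⟨(r₁+⋯+r_i)·λ⟩` for `L = [r₁,…,r_l]`. -/
def Mfun (L : List ℕ) (lam : ℝ) : ℝ :=
  ∑ i ∈ Finset.range (L.length - 1),
    ((L.getD i 0 : ℝ) + (L.getD (i+1) 0 : ℝ)) * ang (((L.take (i+1)).sum : ℝ) * lam)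

/-- `∏_{i=1}^{l-1} (1 - x^{m·(r_i + r_{i+1})})`. -/
def adjProd (x : ℝ) (m : ℕ) (L : List ℕ) : ℝ :=
  ∏ i ∈ Finset.range (L.length - 1), (1 - x ^ (m * (L.getD i 0 + L.getD (i+1) 0)))

/-- `Σ_{1 ≤ i < j ≤ l} r_i r_j`. -/
def pairSum (L : List ℕ) : ℝ :=
  ∑ i ∈ Finset.range L.length, ∑ j ∈ Finset.Ico (i+1) L.length,
    (L.getD i 0 : ℝ) * (L.getD j 0 : ℝ)

lemma ang_eq_fract (x : ℝ) : ang x = 1 - Int.fract x := by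
  simp only [ang, Int.fract]; ring

lemma getD_reverse (L : List ℕ) (k : ℕ) (h : k < L.length) :
    L.reverse.getD k 0 = L.getD (L.length - 1 - k) 0 := by
  rw [List.getD_eq_getElem?_getD, List.getD_eq_getElem?_getD, List.getElem?_reverse h]

lemma fract_ne (r s : ℕ) (d : ℤ) (hr : 0 < r) (hcop : Int.gcd (r:ℤ) d = 1)
    (hs : 0 < s) (hsr : s < r) : Int.fract ((s:ℝ) * ((d:ℝ)/(r:ℝ))) ≠ 0 := by
  intro h
  have hrne : (r:ℝ) ≠ 0 := Nat.cast_ne_zero.mpr hr.ne'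
  have hx : (s:ℝ) * ((d:ℝ)/(r:ℝ)) = (⌊(s:ℝ) * ((d:ℝ)/(r:ℝ))⌋ : ℝ) := by
    have := Int.fract_add_floor ((s:ℝ) * ((d:ℝ)/(r:ℝ)))
    rw [h] at this; linarith
  set z := ⌊(s:ℝ) * ((d:ℝ)/(r:ℝ))⌋ with hz
  have hzz : (s:ℝ) * (d:ℝ) = (z:ℝ) * (r:ℝ) := by
    field_simp at hx; linarith
  have hZ : (s:ℤ) * d = z * (r:ℤ) := by exact_mod_cast hzz
  have hdvd : (r:ℤ) ∣ (s:ℤ) * d := ⟨z, by linarith⟩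
  have hco : IsCoprime (r:ℤ) d := Int.isCoprime_iff_gcd_eq_one.mpr hcop
  have : (r:ℤ) ∣ (s:ℤ) := hco.dvd_of_dvd_mul_right hdvd
  have : r ∣ s := Int.natCast_dvd_natCast.mp this
  exact absurd (Nat.le_of_dvd hs this) (not_le.mpr hsr)

lemma ang_compl (r s : ℕ) (d : ℤ) (hr : 0 < r) (hcop : Int.gcd (r:ℤ) d = 1)
    (hs : 0 < s) (hsr : s < r) :
    ang (((r - s : ℕ) : ℝ) * ((d:ℝ)/(r:ℝ))) = 1 - ang ((s:ℝ) * ((d:ℝ)/(r:ℝ))) := by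
  have hrne : (r:ℝ) ≠ 0 := Nat.cast_ne_zero.mpr hr.ne'
  have hcast : ((r - s : ℕ) : ℝ) = (r:ℝ) - (s:ℝ) := by
    push_cast [hsr.le]; ring
  have h1 : ((r - s : ℕ):ℝ) * ((d:ℝ)/(r:ℝ)) = -((s:ℝ)*((d:ℝ)/(r:ℝ))) + (d:ℤ) := by
    rw [hcast]; field_simp; try ring
  rw [ang_eq_fract, ang_eq_fract, h1, Int.fract_add_intCast,
    Int.fract_neg (fract_ne r s d hr hcop hs hsr)]

lemma take_sum_pos (L : List ℕ) (hpos : ∀ a ∈ L, 0 < a) (k : ℕ) (hk : 0 < k) (hL : L ≠ []) :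
    0 < (L.take k).sum := by
  apply List.sum_pos
  · exact fun a ha => hpos a (List.take_subset k L ha)
  · intro h
    have : (L.take k).length = 0 := by rw [h]; rfl
    rw [List.length_take] at this
    have : L.length = 0 := by omega
    exact hL (List.length_eq_zero_iff.mp this)

lemma mfun_add (L : List ℕ) (hL : L ≠ []) (hpos : ∀ a ∈ L, 0 < a)
    (r : ℕ) (hrpos : 0 < r) (hsum : L.sum = r) (d : ℤ) (hcop : Int.gcd (r:ℤ) d = 1) :
    Mfun L ((d:ℝ)/(r:ℝ)) + Mfun L.reverse ((d:ℝ)/(r:ℝ)) =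
      ∑ i ∈ Finset.range (L.length - 1), ((L.getD i 0 : ℝ) + (L.getD (i+1) 0 : ℝ)) := by
  set lam := (d:ℝ)/(r:ℝ)
  set l := L.length with hl
  have hl1 : 1 ≤ l := List.length_pos_iff.mpr hL
  rw [Mfun, Mfun, List.length_reverse]
  rw [← Finset.sum_range_reflect
    (fun i => ((L.reverse.getD i 0 : ℝ) + (L.reverse.getD (i+1) 0 : ℝ)) *
      ang (((L.reverse.take (i+1)).sum : ℝ) * lam)) (l - 1)]
  rw [← Finset.sum_add_distrib]
  apply Finset.sum_congr rfl
  intro i hi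
  rw [Finset.mem_range] at hi
  have hil : i + 1 < l := by omega
  have e1 : L.reverse.getD (l - 1 - 1 - i) 0 = L.getD (i+1) 0 := by
    rw [getD_reverse _ _ (by omega)]
    congr 1; omega
  have e2 : L.reverse.getD (l - 1 - 1 - i + 1) 0 = L.getD i 0 := by
    rw [getD_reverse _ _ (by omega)]
    congr 1; omega
  have e3 : (L.reverse.take (l - 1 - 1 - i + 1)).sum = r - (L.take (i+1)).sum := by
    have h1 : l - 1 - 1 - i + 1 = l - 1 - i := by omega
    rw [h1, List.take_reverse, List.sum_reverse]
    have h2 : L.length - (l - 1 - i) = i + 1 := by omega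
    rw [h2]
    have := List.sum_take_add_sum_drop L (i+1)
    omega
  have hs_pos : 0 < (L.take (i+1)).sum := take_sum_pos L hpos (i+1) (by omega) hL
  have hs_lt : (L.take (i+1)).sum < r := by
    have hdrop : 0 < (L.drop (i+1)).sum := by
      apply List.sum_pos
      · exact fun a ha => hpos a (List.drop_subset (i+1) L ha)
      · intro h
        have : (L.drop (i+1)).length = 0 := by rw [h]; rfl
        rw [List.length_drop] at this
        omega
    have := List.sum_take_add_sum_drop L (i+1)
    omega
  rw [e1, e2, e3, ang_compl r _ d hrpos hcop hs_pos hs_lt]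
  ring

/-- Lemma 5.8 (Lemma `lm:inverse`) of Liu–Schaffhauser,
"The Yang-Mills Equations over Klein Surfaces". -/
theorem stmt0 (L : List ℕ) (hL : L ≠ []) (hpos : ∀ a ∈ L, 0 < a)
    (r : ℕ) (hrpos : 0 < r) (hsum : L.sum = r)
    (d : ℤ) (hcop : Int.gcd (r : ℤ) d = 1)
    (x : ℝ) (hx : 0 < x) (hx1 : x ≠ 1) :
    x⁻¹ ^ (Mfun L ((d : ℝ) / (r : ℝ))) / adjProd x⁻¹ 1 L =
      (-1 : ℝ) ^ (L.length - 1) *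
        (x ^ (Mfun L.reverse ((d : ℝ) / (r : ℝ))) / adjProd x 1 L) := by
  set lam := (d : ℝ)/(r : ℝ)
  set n := L.length - 1 with hn
  set A := Mfun L lam with hA
  set B := Mfun L.reverse lam with hB
  set N := ∑ i ∈ Finset.range n, (L.getD i 0 + L.getD (i+1) 0) with hN
  have hxne : x ≠ 0 := ne_of_gt hx
  have hl1 : 1 ≤ L.length := List.length_pos_iff.mpr hL
  have hkey : A + B = (N : ℝ) := by
    rw [hA, hB, mfun_add L hL hpos r hrpos hsum d hcop, hN]
    push_cast
    rfl
  -- each factor exponent positive and 1 - x^a ≠ 0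
  have hfac : ∀ i ∈ Finset.range n, (1 : ℝ) - x ^ (1 * (L.getD i 0 + L.getD (i+1) 0)) ≠ 0 := by
    intro i hi
    rw [Finset.mem_range, hn] at hi
    have h1 : i < L.length := by omega
    have h2 : i + 1 < L.length := by omega
    have ha1 : 0 < L.getD i 0 := by
      rw [List.getD_eq_getElem L 0 h1]; exact hpos _ (List.getElem_mem h1)
    have hane : 1 * (L.getD i 0 + L.getD (i+1) 0) ≠ 0 := by omega
    intro h
    have hxa : x ^ (1 * (L.getD i 0 + L.getD (i+1) 0)) = 1 := by linarith
    rcases lt_or_gt_of_ne hx1 with hlt | hgt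
    · have := pow_lt_one₀ hx.le hlt hane
      rw [hxa] at this; exact lt_irrefl _ this
    · have := one_lt_pow₀ hgt hane
      rw [hxa] at this; exact lt_irrefl _ this
  have hP : adjProd x 1 L ≠ 0 := by
    rw [adjProd]
    exact Finset.prod_ne_zero_iff.mpr hfac
  have hadj : adjProd x⁻¹ 1 L = (-1:ℝ)^n * (x ^ N)⁻¹ * adjProd x 1 L := by
    rw [adjProd, adjProd]
    have : ∀ i ∈ Finset.range n,
        (1 : ℝ) - x⁻¹ ^ (1 * (L.getD i 0 + L.getD (i+1) 0)) =
        (-1:ℝ) * (x ^ (1 * (L.getD i 0 + L.getD (i+1) 0)))⁻¹ *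
          (1 - x ^ (1 * (L.getD i 0 + L.getD (i+1) 0))) := by
      intro i _
      set a := 1 * (L.getD i 0 + L.getD (i+1) 0)
      have hxa : (x:ℝ) ^ a ≠ 0 := pow_ne_zero a hxne
      rw [inv_pow]
      field_simp
      ring
    rw [Finset.prod_congr rfl this, Finset.prod_mul_distrib, Finset.prod_mul_distrib]
    congr 1
    congr 1
    · rw [Finset.prod_const, Finset.card_range]
    · simp only [← inv_pow]
      rw [Finset.prod_pow_eq_pow_sum, inv_pow]
      congr 2
      simp [hN]
  have hAB : x ^ A * x ^ B = x ^ N := by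
    rw [← Real.rpow_natCast x N, ← hkey, Real.rpow_add hx]
  have hxApos : (0:ℝ) < x ^ A := Real.rpow_pos_of_pos hx A
  have hxN : x ^ N ≠ 0 := pow_ne_zero N hxne
  have hm1 : ((-1:ℝ)^n) * ((-1:ℝ)^n) = 1 := by
    rw [← pow_add]
    simp [pow_add, ← two_mul, pow_mul]
  have hBN : (x ^ A)⁻¹ * x ^ N = x ^ B := by
    rw [inv_mul_eq_div, div_eq_iff hxApos.ne']
    linear_combination -hAB
  have hpm : ((-1:ℝ)^n) ≠ 0 := pow_ne_zero n (by norm_num)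
  rw [Real.inv_rpow hx.le, hadj]
  field_simp
  rw [sq, hm1, mul_one, hAB]

end
end

section
/- Let g ≥ 2 and 0 ≤ n ≤ g+1 be integers and let r be a positive integer. Define, for real t > 0 with t ≠ 1, Q̄(t) = t^{−r²(g−1)/2} · Q^{ℝ}_{g,n}(r)(t) (a real power of t times Q^{ℝ}_{g,n}(r)(t)). Then Q̄(1/t) = −Q̄(t) for all real t > 0 with t ≠ 1. -/
open Finset

noncomputable section

/-- `Q^{ℝ}_{g,n}(r)(t)`, the mod 2 Poincaré series of the classifying space of the real
gauge group of a rank `r` real bundle on a Klein surface of topological type `(g,n,a)`. -/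
def QR (g n r : ℕ) (t : ℝ) : ℝ :=
  ((∏ j ∈ Finset.range r, (1 + t ^ (2*j+1)) ^ (g + 1 - n)) *
   (∏ j ∈ Finset.range (r - 1), (1 + t ^ (j+1)) ^ n) *
   (∏ j ∈ Finset.range r, (1 + t ^ (j+1)) ^ n)) /
  ((∏ j ∈ Finset.range (r - 1), (1 - t ^ (2*j+2))) * ∏ j ∈ Finset.range r, (1 - t ^ (2*j+2)))

lemma sum_odd' (r : ℕ) : ∑ j ∈ range r, (2*j+1) = r^2 := by
  induction r with
  | zero => simp
  | succ m ih => rw [Finset.sum_range_succ, ih]; ring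

lemma sum_id1 (m : ℕ) : 2 * ∑ j ∈ range m, (j+1) = m*(m+1) := by
  induction m with
  | zero => simp
  | succ k ih => rw [Finset.sum_range_succ, Nat.mul_add, ih]; ring

lemma sum_pair (m : ℕ) :
    (∑ j ∈ range m, (j+1)) + ∑ j ∈ range (m+1), (j+1) = (m+1)^2 :=
  Nat.eq_of_mul_eq_mul_left (show 0 < 2 by norm_num)
    (by rw [Nat.mul_add, sum_id1, sum_id1]; ring)

lemma one_add_inv_pow (t : ℝ) (ht : t ≠ 0) (k m : ℕ) :
    (1 + (1/t) ^ k) ^ m = (1 + t ^ k) ^ m / t ^ (k * m) := by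
  have h : (1 + (1/t) ^ k) = (1 + t ^ k) / t ^ k := by
    rw [div_pow, one_pow, add_div, div_self (pow_ne_zero _ ht), add_comm]
  rw [h, div_pow, ← pow_mul]

lemma one_sub_inv (t : ℝ) (ht : t ≠ 0) (k : ℕ) :
    (1 - (1/t) ^ k) = (-1) * ((1 - t ^ k) / t ^ k) := by
  field_simp
  rw [sub_mul, ← mul_pow, one_div, inv_mul_cancel₀ ht, one_pow]; ring

lemma prod_one_add (t : ℝ) (ht : t ≠ 0) (r m : ℕ) (k : ℕ → ℕ) :
    ∏ j ∈ range r, (1 + (1/t) ^ k j) ^ m =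
      (∏ j ∈ range r, (1 + t ^ k j) ^ m) / t ^ ((∑ j ∈ range r, k j) * m) := by
  calc ∏ j ∈ range r, (1 + (1/t) ^ k j) ^ m
      = ∏ j ∈ range r, ((1 + t ^ k j) ^ m / t ^ (k j * m)) :=
        Finset.prod_congr rfl fun j _ => one_add_inv_pow t ht _ _
    _ = (∏ j ∈ range r, (1 + t ^ k j) ^ m) / ∏ j ∈ range r, t ^ (k j * m) :=
        Finset.prod_div_distrib _ _
    _ = _ := by rw [Finset.prod_pow_eq_pow_sum, ← Finset.sum_mul]

lemma prod_one_sub (t : ℝ) (ht : t ≠ 0) (r : ℕ) (k : ℕ → ℕ) :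
    ∏ j ∈ range r, (1 - (1/t) ^ k j) =
      (-1 : ℝ) ^ r * ((∏ j ∈ range r, (1 - t ^ k j)) / t ^ (∑ j ∈ range r, k j)) := by
  calc ∏ j ∈ range r, (1 - (1/t) ^ k j)
      = ∏ j ∈ range r, ((-1 : ℝ) * ((1 - t ^ k j) / t ^ k j)) :=
        Finset.prod_congr rfl fun j _ => one_sub_inv t ht _
    _ = (∏ j ∈ range r, (-1 : ℝ)) * ∏ j ∈ range r, ((1 - t ^ k j) / t ^ k j) :=
        Finset.prod_mul_distrib
    _ = (-1 : ℝ) ^ r *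
        ((∏ j ∈ range r, (1 - t ^ k j)) / ∏ j ∈ range r, t ^ k j) := by
        rw [Finset.prod_const, Finset.card_range, Finset.prod_div_distrib]
    _ = _ := by rw [Finset.prod_pow_eq_pow_sum]

lemma div_aux (N D X Y : ℝ) (hD : D ≠ 0) (hX : X ≠ 0) (hY : Y ≠ 0) :
    (N / (X * Y)) / (-(D / X)) = -(N / D) / Y := by
  field_simp

/-- `Q̄(1/t) = -Q̄(t)` for the normalized real-gauge-group Poincaré series. -/
theorem stmt1 (g n r : ℕ) (hg : 2 ≤ g) (hn : n ≤ g + 1) (hr : 0 < r)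
    (t : ℝ) (ht : 0 < t) (ht1 : t ≠ 1) :
    (1/t) ^ (-(r : ℝ)^2 * ((g : ℝ) - 1) / 2) * QR g n r (1/t) =
      -((t : ℝ) ^ (-(r : ℝ)^2 * ((g : ℝ) - 1) / 2) * QR g n r t) := by
  have ht0 : t ≠ 0 := ht.ne'
  have hfac : ∀ j : ℕ, (1 - t ^ (2*j+2)) ≠ 0 := by
    intro j hc
    have h1 : t ^ (2*j+2) = 1 := by linarith [sub_eq_zero.mp hc]
    rcases ht1.lt_or_gt with h | h
    · exact absurd h1 (ne_of_lt (pow_lt_one₀ ht.le h (by omega)))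
    · exact absurd h1 (ne_of_gt (one_lt_pow₀ h (by omega)))
  have hD1 : (∏ j ∈ range (r-1), (1 - t ^ (2*j+2))) ≠ 0 :=
    Finset.prod_ne_zero_iff.mpr fun j _ => hfac j
  have hD2 : (∏ j ∈ range r, (1 - t ^ (2*j+2))) ≠ 0 :=
    Finset.prod_ne_zero_iff.mpr fun j _ => hfac j
  set S2 := ∑ j ∈ range (r-1), (j+1) with hS2def
  set S3 := ∑ j ∈ range r, (j+1) with hS3def
  have hS : S2 + S3 = r^2 := by
    obtain ⟨m, rfl⟩ : ∃ m, r = m + 1 := ⟨r - 1, by omega⟩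
    simpa [hS2def, hS3def] using sum_pair m
  have hsign : ((-1 : ℝ)) ^ (r-1) * (-1 : ℝ) ^ r = -1 := by
    obtain ⟨m, rfl⟩ : ∃ m, r = m + 1 := ⟨r - 1, by omega⟩
    rw [show m + 1 - 1 = m from rfl, ← pow_add, show m + (m+1) = 2*m+1 by ring,
      pow_succ, pow_mul]
    norm_num
  have hb1 : ∑ j ∈ range (r-1), (2*j+2) = 2 * S2 := by
    rw [hS2def, Finset.mul_sum]
    exact Finset.sum_congr rfl fun j _ => by ring
  have hb2 : ∑ j ∈ range r, (2*j+2) = 2 * S3 := by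
    rw [hS3def, Finset.mul_sum]
    exact Finset.sum_congr rfl fun j _ => by ring
  have hexp : r^2*(g+1-n) + S2*n + S3*n = (2*S2 + 2*S3) + r^2*(g-1) := by
    have h1 : (g+1-n) + n = g + 1 := by omega
    have h2 : g + 1 = 2 + (g-1) := by omega
    calc r^2*(g+1-n) + S2*n + S3*n
        = r^2*(g+1-n) + (S2+S3)*n := by ring
      _ = r^2*(g+1-n) + r^2*n := by rw [hS]
      _ = r^2*((g+1-n)+n) := by ring
      _ = r^2*(2+(g-1)) := by rw [h1, h2]
      _ = (2*S2 + 2*S3) + r^2*(g-1) := by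
          have h3 : 2*S2 + 2*S3 = 2*r^2 := by omega
          rw [h3]; ring
  have hQR : QR g n r (1/t) = -(QR g n r t) / t ^ (r^2*(g-1)) := by
    unfold QR
    rw [prod_one_add t ht0 r (g+1-n) (fun j => 2*j+1),
      prod_one_add t ht0 (r-1) n (fun j => j+1),
      prod_one_add t ht0 r n (fun j => j+1),
      prod_one_sub t ht0 (r-1) (fun j => 2*j+2),
      prod_one_sub t ht0 r (fun j => 2*j+2)]
    rw [sum_odd', ← hS2def, ← hS3def, hb1, hb2]
    set P1 := ∏ j ∈ Finset.range r, (1 + t ^ (2*j+1)) ^ (g + 1 - n) with hP1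
    set P2 := ∏ j ∈ Finset.range (r - 1), (1 + t ^ (j+1)) ^ n with hP2
    set P3 := ∏ j ∈ Finset.range r, (1 + t ^ (j+1)) ^ n with hP3
    set D1 := ∏ j ∈ Finset.range (r-1), (1 - t ^ (2*j+2)) with hD1'
    set D2 := ∏ j ∈ Finset.range r, (1 - t ^ (2*j+2)) with hD2'
    have htSA : t ^ (r^2*(g+1-n)) * t ^ (S2*n) * t ^ (S3*n)
        = (t ^ (2*S2) * t ^ (2*S3)) * t ^ (r^2*(g-1)) := by
      rw [← pow_add, ← pow_add, ← pow_add, ← pow_add, hexp]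
    have hnum : P1 / t ^ (r^2*(g+1-n)) * (P2 / t ^ (S2*n)) * (P3 / t ^ (S3*n))
        = (P1 * P2 * P3) / ((t ^ (2*S2) * t ^ (2*S3)) * t ^ (r^2*(g-1))) := by
      rw [div_mul_div_comm, div_mul_div_comm, htSA]
    have hden : (-1:ℝ) ^ (r-1) * (D1 / t ^ (2*S2)) * ((-1:ℝ) ^ r * (D2 / t ^ (2*S3)))
        = -((D1 * D2) / (t ^ (2*S2) * t ^ (2*S3))) := by
      calc (-1:ℝ) ^ (r-1) * (D1 / t ^ (2*S2)) * ((-1:ℝ) ^ r * (D2 / t ^ (2*S3)))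
          = ((-1:ℝ) ^ (r-1) * (-1:ℝ) ^ r) * ((D1 / t ^ (2*S2)) * (D2 / t ^ (2*S3))) := by
            ring
        _ = -1 * ((D1 * D2) / (t ^ (2*S2) * t ^ (2*S3))) := by
            rw [hsign, div_mul_div_comm]
        _ = _ := by ring
    rw [hnum, hden]
    exact div_aux (P1 * P2 * P3) (D1 * D2) (t ^ (2*S2) * t ^ (2*S3)) (t ^ (r^2*(g-1)))
      (mul_ne_zero hD1 hD2) (mul_ne_zero (pow_ne_zero _ ht0) (pow_ne_zero _ ht0))
      (pow_ne_zero _ ht0)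
  rw [hQR]
  have hCcast : ((r^2*(g-1) : ℕ) : ℝ) = (r:ℝ)^2 * ((g:ℝ) - 1) := by
    rw [Nat.cast_mul, Nat.cast_pow, Nat.cast_sub (show 1 ≤ g by omega)]
    push_cast
    ring
  have h3 : (1/t) ^ (-(r : ℝ)^2 * ((g : ℝ) - 1) / 2)
      = t ^ (-(r : ℝ)^2 * ((g : ℝ) - 1) / 2) * t ^ ((r^2*(g-1) : ℕ) : ℝ) := by
    rw [one_div, Real.inv_rpow ht.le, ← Real.rpow_neg ht.le, ← Real.rpow_add ht]
    congr 1
    rw [hCcast]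
    ring
  have h4 : (t:ℝ) ^ (r^2*(g-1)) = t ^ ((r^2*(g-1) : ℕ) : ℝ) :=
    (Real.rpow_natCast t _).symm
  rw [h3, h4]
  have hY : t ^ ((r^2*(g-1) : ℕ) : ℝ) ≠ 0 := (Real.rpow_pos_of_pos ht _).ne'
  field_simp

end
end

section
/- Let g' ≥ 1 be an integer, r a positive integer and d' an integer with gcd(r,d') = 1. Define F(t) = (1−t) · P^{ℍ,ev}_{g'}(r,d')(t) for real t > 0 with t ≠ 1. Then for all suchت t one has t^{r²(2g'−1)+1} · F(1/t) = F(t). -/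
open Finset

noncomputable section

/-- The block factor `∏_{j=1}^{rᵢ}(1+t^{2j-1})^{2g'+1} / (∏_{j=1}^{rᵢ-1}(1-t^{2j}) ∏_{j=1}^{rᵢ}(1-t^{2j}))`. -/
def blockHev (g' : ℕ) (t : ℝ) (ri : ℕ) : ℝ :=
  (∏ j ∈ Finset.range ri, (1 + t ^ (2*j+1)) ^ (2*g'+1)) /
  ((∏ j ∈ Finset.range (ri - 1), (1 - t ^ (2*j+2))) * ∏ j ∈ Finset.range ri, (1 - t ^ (2*j+2)))

/-- The closed formula `P^{ℍ,ev}_{g'}(r,d)(t)` (quaternionic, even genus `2g'`, no real points). -/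
def PHev (g' r : ℕ) (d : ℤ) (t : ℝ) : ℝ :=
  ∑ c : Composition r,
    (-1 : ℝ) ^ (c.length - 1) *
    (t ^ (2 * Mfun c.blocks ((d : ℝ) / (r : ℝ))) / adjProd t 2 c.blocks) *
    t ^ ((2 * (g' : ℝ) - 1) * pairSum c.blocks) *
    (c.blocks.map (blockHev g' t)).prod


/-! ### Auxiliary lemmas -/

lemma sum_two_mul_add_one (n : ℕ) : ∑ j ∈ Finset.range n, (2*j+1) = n*n := by
  induction n with
  | zero => simp
  | succ n ih => rw [Finset.sum_range_succ, ih]; ring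

lemma sum_two_mul_add_two (n : ℕ) : ∑ j ∈ Finset.range n, (2*j+2) = n*(n+1) := by
  induction n with
  | zero => simp
  | succ n ih => rw [Finset.sum_range_succ, ih]; ring

lemma my_pow_ne_one {t : ℝ} (ht : 0 < t) (ht1 : t ≠ 1) {k : ℕ} (hk : k ≠ 0) : t ^ k ≠ 1 := by
  rcases lt_trichotomy t 1 with h | h | h
  · exact ne_of_lt (pow_lt_one₀ ht.le h hk)
  · exact absurd h ht1
  · exact ne_of_gt (one_lt_pow₀ h hk)

lemma prod_one_sub_inv {t : ℝ} (ht : t ≠ 0) (n : ℕ) (e : ℕ → ℕ) :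
    ∏ j ∈ Finset.range n, (1 - t⁻¹ ^ e j) =
      (-1)^n * (∏ j ∈ Finset.range n, (1 - t ^ e j)) / t ^ (∑ j ∈ Finset.range n, e j) := by
  have step : ∀ j ∈ Finset.range n, (1 - t⁻¹ ^ e j) = (-1) * (1 - t ^ e j) / t ^ e j := by
    intro j _; rw [inv_pow]; field_simp; ring
  rw [Finset.prod_congr rfl step, Finset.prod_div_distrib, Finset.prod_mul_distrib,
    Finset.prod_const, Finset.prod_pow_eq_pow_sum, Finset.card_range]

lemma prod_one_add_inv {t : ℝ} (ht : t ≠ 0) (n : ℕ) (e : ℕ → ℕ) :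
    ∏ j ∈ Finset.range n, (1 + t⁻¹ ^ e j) =
      (∏ j ∈ Finset.range n, (1 + t ^ e j)) / t ^ (∑ j ∈ Finset.range n, e j) := by
  have step : ∀ j ∈ Finset.range n, (1 + t⁻¹ ^ e j) = (1 + t ^ e j) / t ^ e j := by
    intro j _; rw [inv_pow]; field_simp; ring
  rw [Finset.prod_congr rfl step, Finset.prod_div_distrib, Finset.prod_pow_eq_pow_sum]

lemma ang_int_sub (n : ℤ) (x : ℝ) (hx : Int.fract x ≠ 0) : ang ((n:ℝ) - x) = 1 - ang x := by
  have h : (n:ℝ) - x = (n:ℝ) + (-x) := by ring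
  rw [ang_eq_fract, ang_eq_fract, h, Int.fract_intCast_add, Int.fract_neg hx]

lemma fract_ne_zero_frac (r : ℕ) (hr : 0 < r) (d' : ℤ) (hcop : Int.gcd (r:ℤ) d' = 1)
    (s : ℕ) (h0 : 0 < s) (hs : s < r) :
    Int.fract ((s:ℝ) * ((d':ℝ)/(r:ℝ))) ≠ 0 := by
  intro h
  have hr0 : (r:ℝ) ≠ 0 := Nat.cast_ne_zero.mpr hr.ne'
  have hx : (s:ℝ) * ((d':ℝ)/(r:ℝ)) = (⌊(s:ℝ) * ((d':ℝ)/(r:ℝ))⌋ : ℝ) := by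
    rw [Int.fract] at h
    linarith [h]
  set n := ⌊(s:ℝ) * ((d':ℝ)/(r:ℝ))⌋ with hn
  have h2 : (s:ℝ) * (d':ℝ) = (n:ℝ) * (r:ℝ) := by
    field_simp at hx
    linarith [hx]
  have h3 : (s:ℤ) * d' = n * (r:ℤ) := by exact_mod_cast h2
  have hdvd : (r:ℤ) ∣ (s:ℤ) * d' := ⟨n, by linarith [h3]⟩
  have hdvd2 : (r:ℤ) ∣ (s:ℤ) :=
    IsCoprime.dvd_of_dvd_mul_right (Int.isCoprime_iff_gcd_eq_one.mpr hcop) hdvd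
  have : r ∣ s := Int.natCast_dvd_natCast.mp hdvd2
  exact absurd (Nat.le_of_dvd h0 this) (not_le.mpr hs)

lemma blockHev_inv (g' : ℕ) (hg : 1 ≤ g') {t : ℝ} (ht : 0 < t) (ht1 : t ≠ 1)
    (ri : ℕ) (hri : 0 < ri) :
    blockHev g' t⁻¹ ri = - blockHev g' t ri / t ^ ((2*g'-1) * (ri*ri)) := by
  obtain ⟨m, rfl⟩ : ∃ m, ri = m+1 := ⟨ri-1, by omega⟩
  obtain ⟨b, rfl⟩ : ∃ b, g' = b+1 := ⟨g'-1, by omega⟩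
  have ht0 : t ≠ 0 := ne_of_gt ht
  unfold blockHev
  simp only [Finset.prod_pow]
  have hN : (∏ j ∈ Finset.range (m+1), (1 + t⁻¹ ^ (2*j+1))) ^ (2*(b+1)+1) =
      (∏ j ∈ Finset.range (m+1), (1 + t ^ (2*j+1))) ^ (2*(b+1)+1)
        / t ^ (((m+1)*(m+1)) * (2*(b+1)+1)) := by
    rw [prod_one_add_inv ht0, sum_two_mul_add_one, div_pow, ← pow_mul]
  have hD1 : ∏ j ∈ Finset.range (m+1-1), (1 - t⁻¹ ^ (2*j+2)) =
      (-1)^m * (∏ j ∈ Finset.range m, (1 - t ^ (2*j+2))) / t ^ (m*(m+1)) := by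
    rw [show m+1-1 = m from rfl, prod_one_sub_inv ht0, sum_two_mul_add_two]
  have hD2 : ∏ j ∈ Finset.range (m+1), (1 - t⁻¹ ^ (2*j+2)) =
      (-1)^(m+1) * (∏ j ∈ Finset.range (m+1), (1 - t ^ (2*j+2))) / t ^ ((m+1)*(m+2)) := by
    rw [prod_one_sub_inv ht0, sum_two_mul_add_two]
  rw [hN, hD1, hD2]
  rw [show m+1-1 = m from rfl]
  set N := (∏ j ∈ Finset.range (m+1), (1 + t ^ (2*j+1))) ^ (2*(b+1)+1) with hNdef
  set D1 := ∏ j ∈ Finset.range m, (1 - t ^ (2*j+2)) with hD1def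
  set D2 := ∏ j ∈ Finset.range (m+1), (1 - t ^ (2*j+2)) with hD2def
  have hD1ne : D1 ≠ 0 := by
    rw [hD1def]
    apply Finset.prod_ne_zero_iff.mpr
    intro j _
    have := my_pow_ne_one ht ht1 (k := 2*j+2) (by omega)
    intro hc; apply this; linarith [sub_eq_zero.mp hc]
  have hD2ne : D2 ≠ 0 := by
    rw [hD2def]
    apply Finset.prod_ne_zero_iff.mpr
    intro j _
    have := my_pow_ne_one ht ht1 (k := 2*j+2) (by omega)
    intro hc; apply this; linarith [sub_eq_zero.mp hc]
  have hg' : 2*(b+1)-1 = 2*b+1 := by omega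
  rw [hg', pow_succ (-1:ℝ) m]
  rcases neg_one_pow_eq_or ℝ m with h | h <;> rw [h] <;>
    field_simp <;> ring

lemma getD_rev (L : List ℕ) (i : ℕ) (h : i < L.length) :
    L.reverse.getD i 0 = L.getD (L.length - 1 - i) 0 := by
  rw [List.getD_eq_getElem?_getD, List.getD_eq_getElem?_getD,
    List.getElem?_reverse h]

lemma sum_getD {M : Type*} [AddCommMonoid M] (L : List ℕ) (f : ℕ → M) :
    ∑ i ∈ Finset.range L.length, f (L.getD i 0) = (L.map f).sum := by
  induction L with
  | nil => simp
  | cons a L ih =>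
    rw [List.length_cons, Finset.sum_range_succ']
    simp only [List.getD_cons_succ, List.getD_cons_zero, ih, List.map_cons, List.sum_cons]
    exact add_comm _ _

lemma pairSum_eq (L : List ℕ) :
    2 * pairSum L + ∑ i ∈ Finset.range L.length, (L.getD i 0 : ℝ) * (L.getD i 0 : ℝ)
      = (∑ i ∈ Finset.range L.length, (L.getD i 0 : ℝ))^2 := by
  set l := L.length
  set a : ℕ → ℝ := fun i => (L.getD i 0 : ℝ) with ha
  have upper : pairSum L = ∑ j ∈ Finset.range l, ∑ i ∈ Finset.range j, a i * a j := by
    unfold pairSum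
    rw [Finset.range_eq_Ico, Finset.sum_Ico_Ico_comm']
    simp only [ha, Finset.range_eq_Ico]
  have hsq : (∑ i ∈ Finset.range l, a i)^2
      = ∑ i ∈ Finset.range l, ∑ j ∈ Finset.range l, a i * a j := by
    rw [sq, Finset.sum_mul_sum]
  have split : ∀ i ∈ Finset.range l, ∑ j ∈ Finset.range l, a i * a j =
      ((∑ j ∈ Finset.range i, a i * a j) + a i * a i) + ∑ j ∈ Finset.Ico (i+1) l, a i * a j := by
    intro i hi
    rw [← Finset.sum_range_succ (fun j => a i * a j) i,
      Finset.sum_range_add_sum_Ico _ (Nat.succ_le_of_lt (Finset.mem_range.mp hi))]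
  rw [hsq, Finset.sum_congr rfl split, Finset.sum_add_distrib, Finset.sum_add_distrib]
  have lower : ∑ i ∈ Finset.range l, ∑ j ∈ Finset.range i, a i * a j
      = ∑ j ∈ Finset.range l, ∑ i ∈ Finset.range j, a i * a j := by
    apply Finset.sum_congr rfl
    intro j _
    exact Finset.sum_congr rfl fun i _ => mul_comm _ _
  rw [lower, ← upper]
  unfold pairSum
  ring

lemma pairSum_rev (L : List ℕ) : pairSum L.reverse = pairSum L := by
  have e1 : ∑ i ∈ Finset.range L.reverse.length, (L.reverse.getD i 0 : ℝ)
      = ∑ i ∈ Finset.range L.length, (L.getD i 0 : ℝ) := by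
    rw [sum_getD L.reverse (fun x => (x:ℝ)), sum_getD L (fun x => (x:ℝ)),
      List.map_reverse, List.sum_reverse]
  have e2 : ∑ i ∈ Finset.range L.reverse.length,
        (L.reverse.getD i 0 : ℝ) * (L.reverse.getD i 0 : ℝ)
      = ∑ i ∈ Finset.range L.length, (L.getD i 0 : ℝ) * (L.getD i 0 : ℝ) := by
    rw [sum_getD L.reverse (fun x => (x:ℝ)*(x:ℝ)), sum_getD L (fun x => (x:ℝ)*(x:ℝ)),
      List.map_reverse, List.sum_reverse]
  have h1 := pairSum_eq L.reverse
  have h2 := pairSum_eq L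
  rw [e1, e2] at h1
  linarith

lemma adjProd_rev (x : ℝ) (m : ℕ) (L : List ℕ) : adjProd x m L.reverse = adjProd x m L := by
  unfold adjProd
  rw [List.length_reverse]
  rw [← Finset.prod_range_reflect
    (fun j => 1 - x ^ (m * (L.reverse.getD j 0 + L.reverse.getD (j+1) 0))) (L.length - 1)]
  apply Finset.prod_congr rfl
  intro i hi
  have hi' : i < L.length - 1 := Finset.mem_range.mp hi
  rw [getD_rev L (L.length - 1 - 1 - i) (by omega), getD_rev L (L.length - 1 - 1 - i + 1) (by omega)]
  have e1 : L.length - 1 - (L.length - 1 - 1 - i) = i + 1 := by omega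
  have e2 : L.length - 1 - (L.length - 1 - 1 - i + 1) = i := by omega
  rw [e1, e2, add_comm]

lemma adjProd_inv {t : ℝ} (ht : t ≠ 0) (L : List ℕ) :
    adjProd t⁻¹ 2 L = (-1)^(L.length - 1) * adjProd t 2 L
      / t ^ (∑ i ∈ Finset.range (L.length - 1), 2*(L.getD i 0 + L.getD (i+1) 0)) := by
  unfold adjProd
  exact prod_one_sub_inv ht _ _

lemma sum_pos_of_ne_nil (L : List ℕ) (h : L ≠ []) (hpos : ∀ x ∈ L, 0 < x) : 0 < L.sum := by
  cases L with
  | nil => exact absurd rfl h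
  | cons a L =>
    have := hpos a (List.mem_cons_self)
    simp only [List.sum_cons]
    omega

lemma Mfun_rev (r : ℕ) (hr : 0 < r) (d' : ℤ) (hcop : Int.gcd (r:ℤ) d' = 1)
    (L : List ℕ) (hpos : ∀ x ∈ L, 0 < x) (hsum : L.sum = r) :
    Mfun L.reverse ((d':ℝ)/(r:ℝ)) =
      (∑ i ∈ Finset.range (L.length - 1), ((L.getD i 0 : ℝ) + (L.getD (i+1) 0 : ℝ)))
        - Mfun L ((d':ℝ)/(r:ℝ)) := by
  have hr0 : (r:ℝ) ≠ 0 := Nat.cast_ne_zero.mpr hr.ne'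
  unfold Mfun
  rw [List.length_reverse]
  have key : ∀ i ∈ Finset.range (L.length - 1),
      ((L.reverse.getD i 0 : ℝ) + (L.reverse.getD (i+1) 0 : ℝ)) *
          ang (((L.reverse.take (i+1)).sum : ℝ) * ((d':ℝ)/(r:ℝ)))
      = (fun j => ((L.getD j 0:ℝ) + (L.getD (j+1) 0:ℝ)) *
          (1 - ang (((L.take (j+1)).sum : ℝ) * ((d':ℝ)/(r:ℝ))))) (L.length - 1 - 1 - i) := by
    intro i hi
    have hi' : i < L.length - 1 := Finset.mem_range.mp hi
    have hl2 : 2 ≤ L.length := by omega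
    simp only
    rw [getD_rev L i (by omega), getD_rev L (i+1) (by omega)]
    have e1 : L.length - 1 - i = (L.length - 1 - 1 - i) + 1 := by omega
    have e2 : L.length - 1 - (i+1) = L.length - 1 - 1 - i := by omega
    rw [e1, e2]
    have htake : (L.reverse.take (i+1)) = (L.drop (L.length - (i+1))).reverse := by
      rw [List.take_reverse]
    set k := L.length - 1 - i with hk
    have hk1 : L.length - (i+1) = k := by omega
    have hsplit : (L.take k).sum + (L.drop k).sum = L.sum := by
      rw [← List.sum_append, List.take_append_drop]
    set s : ℕ := (L.take k).sum with hsdef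
    have hs0 : 0 < s := by
      apply sum_pos_of_ne_nil
      · intro hnil
        rw [List.take_eq_nil_iff] at hnil
        rcases hnil with h | h
        · omega
        · rw [h] at hl2; simp at hl2
      · intro x hx
        exact hpos x (List.mem_of_mem_take hx)
    have hslt : s < r := by
      have hdrop0 : 0 < (L.drop k).sum := by
        apply sum_pos_of_ne_nil
        · intro hnil
          rw [List.drop_eq_nil_iff] at hnil
          omega
        · intro x hx
          exact hpos x (List.mem_of_mem_drop hx)
      omega
    have hsum' : ((L.reverse.take (i+1)).sum : ℝ) = (r:ℝ) - (s:ℝ) := by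
      rw [htake, List.sum_reverse, hk1]
      have : (L.drop k).sum = r - s := by omega
      rw [this]
      push_cast [Nat.cast_sub (le_of_lt hslt)]
      ring
    rw [hsum']
    have harg : ((r:ℝ) - (s:ℝ)) * ((d':ℝ)/(r:ℝ)) = (d':ℝ) - (s:ℝ) * ((d':ℝ)/(r:ℝ)) := by
      field_simp
    rw [harg, ang_int_sub d' _ (fract_ne_zero_frac r hr d' hcop s hs0 hslt)]
    have e3 : L.length - 1 - 1 - i + 1 = k := by omega
    rw [e3, ← hsdef]
    ring
  rw [Finset.sum_congr rfl key]
  have hrefl := Finset.sum_range_reflect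
    (fun j => ((L.getD j 0:ℝ) + (L.getD (j+1) 0:ℝ)) *
      (1 - ang (((L.take (j+1)).sum : ℝ) * ((d':ℝ)/(r:ℝ))))) (L.length - 1)
  rw [hrefl]
  simp only [mul_sub, mul_one, Finset.sum_sub_distrib]

lemma prod_blockHev_inv (g' : ℕ) (hg : 1 ≤ g') {t : ℝ} (ht : 0 < t) (ht1 : t ≠ 1) :
    ∀ (L : List ℕ), (∀ x ∈ L, 0 < x) →
    (L.map (blockHev g' t⁻¹)).prod =
      (-1)^L.length * (L.map (blockHev g' t)).prod
        / t ^ ((2*g'-1) * (L.map (fun x => x*x)).sum) := by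
  intro L
  induction L with
  | nil => simp
  | cons a L ih =>
    intro h
    have ht0 : t ≠ 0 := ne_of_gt ht
    simp only [List.map_cons, List.prod_cons, List.length_cons, List.sum_cons]
    rw [blockHev_inv g' hg ht ht1 a (h a (List.mem_cons_self)),
      ih (fun x hx => h x (List.mem_cons_of_mem a hx)),
      Nat.mul_add, pow_add, pow_succ]
    have h1 : t ^ ((2*g'-1) * (a*a)) ≠ 0 := pow_ne_zero _ ht0
    have h2 : t ^ ((2*g'-1) * (L.map (fun x => x*x)).sum) ≠ 0 := pow_ne_zero _ ht0
    field_simp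
    ring

lemma getD_pos (L : List ℕ) (hpos : ∀ x ∈ L, 0 < x) (i : ℕ) (h : i < L.length) :
    0 < L.getD i 0 := by
  have : L.getD i 0 = L[i] := by
    rw [List.getD_eq_getElem?_getD, List.getElem?_eq_getElem h, Option.getD_some]
  rw [this]
  exact hpos _ (List.getElem_mem h)

lemma adjProd_ne_zero {t : ℝ} (ht : 0 < t) (ht1 : t ≠ 1) (L : List ℕ)
    (hpos : ∀ x ∈ L, 0 < x) : adjProd t 2 L ≠ 0 := by
  unfold adjProd
  apply Finset.prod_ne_zero_iff.mpr
  intro i hi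
  have hi' : i < L.length - 1 := Finset.mem_range.mp hi
  have h1 : 0 < L.getD i 0 := getD_pos L hpos i (by omega)
  have := my_pow_ne_one ht ht1 (k := 2 * (L.getD i 0 + L.getD (i+1) 0)) (by omega)
  intro hc; exact this (by linarith [sub_eq_zero.mp hc])

lemma key (g' r : ℕ) (hg : 1 ≤ g') (hr : 0 < r) (d' : ℤ) (hcop : Int.gcd (r:ℤ) d' = 1)
    {t : ℝ} (ht : 0 < t) (ht1 : t ≠ 1) (L : List ℕ) (hne : L ≠ [])
    (hpos : ∀ x ∈ L, 0 < x) (hsum : L.sum = r) :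
    t ^ ((r:ℝ)^2 * (2*(g':ℝ)-1)) *
      ((-1:ℝ) ^ (L.reverse.length - 1) *
        ((1/t) ^ (2 * Mfun L.reverse ((d':ℝ)/(r:ℝ))) / adjProd (1/t) 2 L.reverse) *
        (1/t) ^ ((2*(g':ℝ)-1) * pairSum L.reverse) *
        (L.reverse.map (blockHev g' (1/t))).prod)
    = - ((-1:ℝ) ^ (L.length - 1) *
        (t ^ (2 * Mfun L ((d':ℝ)/(r:ℝ))) / adjProd t 2 L) *
        t ^ ((2*(g':ℝ)-1) * pairSum L) *
        (L.map (blockHev g' t)).prod) := by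
  have ht0 : t ≠ 0 := ne_of_gt ht
  have hl1 : 0 < L.length := List.length_pos_iff.mpr hne
  have hT : ∀ x : ℝ, t ^ x ≠ 0 := fun x => (Real.rpow_pos_of_pos ht x).ne'
  have hinv : ∀ x : ℝ, t⁻¹ ^ x = t ^ (-x) := fun x => by
    rw [Real.inv_rpow ht.le, ← Real.rpow_neg ht.le]
  rw [one_div]
  rw [List.length_reverse, pairSum_rev, adjProd_rev, Mfun_rev r hr d' hcop L hpos hsum,
    adjProd_inv ht0 L, List.map_reverse, List.prod_reverse,
    prod_blockHev_inv g' hg ht ht1 L hpos, hinv, hinv,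
    ← Real.rpow_natCast t (∑ i ∈ Finset.range (L.length - 1),
        2*(L.getD i 0 + L.getD (i+1) 0)),
    ← Real.rpow_natCast t ((2*g'-1) * (L.map (fun x => x*x)).sum)]
  set lam := (d':ℝ)/(r:ℝ)
  set M := Mfun L lam with hM
  set ps := pairSum L with hps
  set D := adjProd t 2 L with hD
  set P := (L.map (blockHev g' t)).prod with hP
  set A' := ∑ i ∈ Finset.range (L.length - 1), ((L.getD i 0 : ℝ) + (L.getD (i+1) 0 : ℝ)) with hA'
  set k := 2*(g':ℝ)-1 with hk
  set sqR := ∑ i ∈ Finset.range L.length, (L.getD i 0 : ℝ) * (L.getD i 0 : ℝ) with hsqR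
  have hA : ((∑ i ∈ Finset.range (L.length - 1), 2*(L.getD i 0 + L.getD (i+1) 0) : ℕ) : ℝ)
      = 2*A' := by
    rw [Nat.cast_sum, hA', Finset.mul_sum]
    exact Finset.sum_congr rfl fun i _ => by push_cast; ring
  have hsqcast : (((L.map (fun x => x*x)).sum : ℕ) : ℝ) = sqR := by
    rw [Nat.cast_list_sum, List.map_map, hsqR, sum_getD L (fun x => (x:ℝ)*(x:ℝ))]
    refine congrArg List.sum (List.map_congr_left fun a _ => ?_)
    simp only [Function.comp_apply]
    push_cast
    ring
  have hkcast : (((2*g'-1) * (L.map (fun x => x*x)).sum : ℕ) : ℝ) = k * sqR := by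
    rw [Nat.cast_mul, hsqcast, Nat.cast_sub (by omega : 1 ≤ 2*g'), hk]
    push_cast
    ring
  rw [hA, hkcast]
  have hsumR : ∑ i ∈ Finset.range L.length, (L.getD i 0 : ℝ) = (r:ℝ) := by
    rw [sum_getD L (fun x => (x:ℝ)), show (fun (x:ℕ) => (x:ℝ)) = (Nat.cast : ℕ → ℝ) from rfl,
      ← Nat.cast_list_sum, hsum]
  have hrel : (r:ℝ)^2 = sqR + 2*ps := by
    have h := pairSum_eq L
    rw [hsumR, ← hsqR, ← hps] at h
    linarith
  have hsign : ((-1:ℝ)) ^ L.length = -(-1:ℝ)^(L.length-1) := by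
    conv_lhs => rw [show L.length = (L.length-1)+1 by omega]
    rw [pow_succ]; ring
  rw [hsign]
  have ha1 : t ^ (-(2 * (A' - M))) = t ^ (2*M) / t ^ (2*A') := by
    rw [← Real.rpow_sub ht]; congr 1; ring
  have ha2 : t ^ ((r:ℝ)^2 * k) = t^(k*ps) * t^(k*ps) * t^(k*sqR) := by
    rw [← Real.rpow_add ht, ← Real.rpow_add ht]; congr 1; linear_combination k * hrel
  have ha3 : t ^ (-(k * ps)) = (t ^ (k*ps))⁻¹ := Real.rpow_neg ht.le _
  rw [ha1, ha2, ha3]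
  have hDne : D ≠ 0 := adjProd_ne_zero ht ht1 L hpos
  have n1 : t ^ (2*M) ≠ 0 := hT _
  have n2 : t ^ (2*A') ≠ 0 := hT _
  have n3 : t ^ (k*ps) ≠ 0 := hT _
  have n4 : t ^ (k*sqR) ≠ 0 := hT _
  rcases neg_one_pow_eq_or ℝ (L.length - 1) with hε | hε <;> rw [hε] <;>
    field_simp <;> ring

/-- reversal of a composition -/
def Composition.revc {n : ℕ} (c : Composition n) : Composition n :=
  ⟨c.blocks.reverse, fun {i} hi => c.blocks_pos (List.mem_reverse.mp hi),
    by rw [List.sum_reverse, c.blocks_sum]⟩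

lemma Composition.revc_revc {n : ℕ} (c : Composition n) : c.revc.revc = c := by
  ext1
  simp [Composition.revc]

def revEquiv (n : ℕ) : Equiv (Composition n) (Composition n) :=
  ⟨Composition.revc, Composition.revc, fun c => c.revc_revc, fun c => c.revc_revc⟩

/-- Strange Poincaré duality for `(1-t)·P^{ℍ,ev}_{g'}(r,d')`
(Theorem `strange_Poincare_duality_no_real_points` (2)). -/
theorem stmt5 (g' r : ℕ) (hg : 1 ≤ g') (hr : 0 < r)
    (d' : ℤ) (hcop : Int.gcd (r : ℤ) d' = 1)
    (t : ℝ) (ht : 0 < t) (ht1 : t ≠ 1) :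
    t ^ ((r : ℝ)^2 * (2 * (g' : ℝ) - 1) + 1) * ((1 - 1/t) * PHev g' r d' (1/t)) =
      (1 - t) * PHev g' r d' t := by
  have ht0 : t ≠ 0 := ne_of_gt ht
  have key2 : t ^ ((r:ℝ)^2 * (2*(g':ℝ)-1)) * PHev g' r d' (1/t) = - PHev g' r d' t := by
    unfold PHev
    rw [Finset.mul_sum, ← Finset.sum_neg_distrib]
    apply Fintype.sum_equiv (revEquiv r)
    intro c
    have hblocks : ((revEquiv r) c).blocks = c.blocks.reverse := rfl
    have hlen : ((revEquiv r) c).length = c.blocks.reverse.length := rfl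
    have hclen : c.length = c.blocks.length := rfl
    rw [hblocks, hlen, hclen]
    have hne : c.blocks ≠ [] := by
      have := c.length_pos_of_pos hr
      rw [← c.blocks_length] at this
      exact List.ne_nil_of_length_pos this
    have h := key g' r hg hr d' hcop ht ht1 c.blocks.reverse
      (by simp [hne]) (fun x hx => c.blocks_pos (List.mem_reverse.mp hx))
      (by rw [List.sum_reverse, c.blocks_sum])
    rw [List.reverse_reverse] at h
    exact h
  rw [Real.rpow_add ht, Real.rpow_one]
  have step : t ^ ((r:ℝ)^2 * (2*(g':ℝ)-1)) * t * ((1 - 1/t) * PHev g' r d' (1/t))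
      = (t * (1 - 1/t)) * (t ^ ((r:ℝ)^2 * (2*(g':ℝ)-1)) * PHev g' r d' (1/t)) := by ring
  rw [step, key2, show t * (1 - 1/t) = t - 1 by field_simp]
  ring


end
end

section
/- There is no continuous map φ : [0,1] × [0,1] → ℂ such that |φ(s,t)| = 1 for all (s,t) ∈ [0,1]², φ(s,0) = 1 and φ(s,1) = −1 for all s ∈ [0,1], and φ(1,t) = conj(φ(0,t)) (the complex conjugate) for all t ∈ [0,1]. -/
open Complex Set Finset Real

/-- There is no continuous unit-circle-valued map `φ` on the square with `φ(s,0) = 1`,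
`φ(s,1) = -1`, and `φ(1,t)` the complex conjugate of `φ(0,t)`. -/
theorem stmt17 :
    ¬ ∃ φ : unitInterval × unitInterval → ℂ, Continuous φ ∧
      (∀ p, ‖φ p‖ = 1) ∧
      (∀ s, φ (s, 0) = 1) ∧
      (∀ s, φ (s, 1) = -1) ∧
      (∀ t, φ (1, t) = starRingEnd ℂ (φ (0, t))) := by
  rintro ⟨φ, hcont, habs, h0, h1, hconj⟩
  have hne : ∀ p, φ p ≠ 0 := by
    intro p hp
    have := habs p
    rw [hp] at this
    simp at this
  -- uniform continuity gives a fine subdivision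
  have hUC : UniformContinuous φ := CompactSpace.uniformContinuous_of_continuous hcont
  obtain ⟨δ, hδpos, hδ⟩ := Metric.uniformContinuous_iff.mp hUC 2 two_pos
  obtain ⟨n, hn⟩ := exists_nat_one_div_lt hδpos
  set N : ℕ := n + 1 with hN
  have hNpos : (0:ℝ) < N := by positivity
  have hNcast : (N:ℝ) = (n:ℝ) + 1 := by rw [hN]; push_cast; ring
  -- subdivision points
  have hmem : ∀ k : ℕ, min ((k:ℝ)/N) 1 ∈ unitInterval :=
    fun k => ⟨le_min (by positivity) zero_le_one, min_le_right _ _⟩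
  set t : ℕ → unitInterval := fun k => ⟨min ((k:ℝ)/N) 1, hmem k⟩ with ht
  have htval : ∀ k : ℕ, k ≤ N → (t k : ℝ) = k / N := fun k hk =>
    min_eq_left ((div_le_one hNpos).2 (by exact_mod_cast hk))
  have ht0 : t 0 = 0 := by ext; simp [ht]
  have htN : t N = 1 := by
    ext
    have := htval N le_rfl
    rw [ht] at this ⊢
    simp only at this ⊢
    rw [this, div_self hNpos.ne']
    rfl
  -- the circle-valued samples
  set Φ : ℕ → unitInterval → Circle := fun k s =>
    ⟨φ (s, t k), by simp [Submonoid.unitSphere, habs]⟩ with hΦ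
  have hΦcoe : ∀ k s, ((Φ k s : Circle) : ℂ) = φ (s, t k) := fun k s => rfl
  have hΦcont : ∀ k, Continuous fun s => Φ k s := fun k =>
    Continuous.subtype_mk (hcont.comp (continuous_id.prodMk continuous_const)) _
  set r : ℕ → unitInterval → Circle := fun k s => Φ (k+1) s / Φ k s with hr
  have hrcoe : ∀ k s, ((r k s : Circle) : ℂ) = φ (s, t (k+1)) / φ (s, t k) := fun k s => rfl
  -- the successive ratios never equal -1
  have hclose : ∀ k, k < N → ∀ s, dist (φ (s, t (k+1))) (φ (s, t k)) < 2 := by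
    intro k hk s
    apply hδ
    rw [Prod.dist_eq]
    have h1' : dist (t (k+1)) (t k) < δ := by
      rw [Subtype.dist_eq, htval (k+1) hk, htval k hk.le, Real.dist_eq]
      have he : ((k+1:ℕ):ℝ)/N - (k:ℝ)/N = 1/N := by push_cast; field_simp; ring
      rw [he, abs_of_pos (by positivity)]
      rw [hNcast]
      exact hn
    rw [max_lt_iff]
    exact ⟨by rw [dist_self]; exact hδpos, h1'⟩
  have hrne : ∀ k, k < N → ∀ s, ((r k s : Circle) : ℂ) ≠ -1 := by
    intro k hk s h
    rw [hrcoe, div_eq_iff (hne _), neg_one_mul] at h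
    have hd := hclose k hk s
    rw [h, Complex.dist_eq] at hd
    have h2 : ‖-φ (s, t k) - φ (s, t k)‖ = 2 := by
      have he : -φ (s, t k) - φ (s, t k) = -(2 * φ (s, t k)) := by ring
      rw [he, norm_neg, norm_mul, habs]
      simp
    rw [h2] at hd
    exact lt_irrefl _ hd
  -- hence their arguments avoid π
  have hargne : ∀ k, k < N → ∀ s, Complex.arg ((r k s : Circle) : ℂ) ≠ Real.pi := by
    intro k hk s h
    rw [Complex.arg_eq_pi_iff] at h
    apply hrne k hk s
    have habs1 : ‖((r k s : Circle) : ℂ)‖ = 1 := Circle.norm_coe _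
    have hre : ((r k s : Circle) : ℂ) = (((r k s : Circle) : ℂ).re : ℂ) :=
      Complex.ext rfl (by simp [h.2])
    rw [hre] at habs1
    rw [Complex.norm_real, Real.norm_eq_abs, abs_of_neg h.1] at habs1
    have hre1 : ((r k s : Circle) : ℂ).re = -1 := by linarith
    rw [hre, hre1]
    norm_num
  -- the discrete argument lift
  set A : unitInterval → ℝ := fun s => ∑ k ∈ Finset.range N, Complex.arg ((r k s : Circle) : ℂ)
    with hA
  -- exp of the lift
  have hexp_sum : ∀ (m : ℕ) (f : ℕ → ℝ),
      Circle.exp (∑ k ∈ Finset.range m, f k) = ∏ k ∈ Finset.range m, Circle.exp (f k) := by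
    intro m f
    induction m with
    | zero => simp
    | succ m ih => rw [Finset.sum_range_succ, Finset.prod_range_succ, Circle.exp_add, ih]
  have hAexp : ∀ s, Circle.exp (A s) = Φ N s / Φ 0 s := by
    intro s
    rw [hA, hexp_sum]
    have he : ∀ k ∈ Finset.range N, Circle.exp (Complex.arg ((r k s : Circle) : ℂ)) = r k s :=
      fun k _ => Circle.exp_arg _
    rw [Finset.prod_congr rfl he, hr]
    exact Finset.prod_range_div (fun k => Φ k s) N
  have hAneg : ∀ s, ((Circle.exp (A s) : Circle) : ℂ) = -1 := by
    intro s
    rw [hAexp, Circle.coe_div, hΦcoe, hΦcoe, htN, ht0, h1, h0, div_one]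
  -- conjugation symmetry
  have hA10 : A 1 = - A 0 := by
    rw [hA]
    simp only
    rw [← Finset.sum_neg_distrib]
    apply Finset.sum_congr rfl
    intro k hk
    have hk' := Finset.mem_range.mp hk
    have hc : ((r k 1 : Circle) : ℂ) = starRingEnd ℂ ((r k 0 : Circle) : ℂ) := by
      rw [hrcoe, hrcoe, hconj, hconj]
      exact (map_div₀ (starRingEnd ℂ) _ _).symm
    rw [hc, Complex.arg_conj, if_neg (hargne k hk' 0)]
  -- continuity of the lift
  have hAcont : Continuous A := by
    rw [hA]
    apply continuous_finset_sum
    intro k hk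
    have hk' := Finset.mem_range.mp hk
    have hrc : Continuous fun s => ((r k s : Circle) : ℂ) :=
      continuous_subtype_val.comp ((hΦcont (k+1)).div' (hΦcont k))
    rw [continuous_iff_continuousAt]
    intro s
    apply (Complex.continuousAt_arg _).comp hrc.continuousAt
    rw [Complex.mem_slitPlane_iff_arg]
    exact ⟨hargne k hk' s, Circle.coe_ne_zero _⟩
  -- IVT: A takes the value 0
  set B : ℝ → ℝ := fun x => A (Set.projIcc 0 1 zero_le_one x) with hB
  have hBcont : Continuous B := hAcont.comp continuous_projIcc
  have hB0 : B 0 = A 0 := by rw [hB]; simp [Set.projIcc_left]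
  have hB1 : B 1 = A 1 := by rw [hB]; simp [Set.projIcc_right]
  have h0mem : (0:ℝ) ∈ Set.uIcc (B 0) (B 1) := by
    rw [hB0, hB1, hA10]
    rcases le_total (A 0) 0 with h | h
    · exact Set.mem_uIcc.2 (Or.inl ⟨h, by linarith⟩)
    · exact Set.mem_uIcc.2 (Or.inr ⟨by linarith, h⟩)
  obtain ⟨x, -, hx⟩ := intermediate_value_uIcc (hBcont.continuousOn (s := Set.uIcc 0 1)) h0mem
  have hfin := hAneg (Set.projIcc 0 1 zero_le_one x)
  rw [show A (Set.projIcc 0 1 zero_le_one x) = 0 from hx, Circle.exp_zero, Circle.coe_one] at hfin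
  norm_num at hfin
end
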